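/- Let q = e^{2πi/r} with r ≥ 3 odd, so r' = r. Define the left integral λ_α on u_ᾱ by λ_α(E^ℓ F^{(m)} T_{2n+α}^0) = δ_{ℓ,r−1} δ_{m,r−1} q^{(2n+α)(1−r)}/√r on the basis {E^ℓ F^{(m)} T_{2n+α}^0}. Then λ_α(F^ℓ E^m K^n) = δ_{ℓ,r−1} δ_{m,r−1} χ_{(r/2)ℤ}(n+1) · (√r [r−1]!/{1}^{r−1}) · q^{(n+1−r)α}, where χ_A is the indicator function of A ⊂ ℂ. -/

import Mathlib

noncomputable section

/-- `q^z = e^{2πiz/r}` for `q = e^{2πi/r}`. -/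
def qp (r : ℕ) (z : ℂ) : ℂ := Complex.exp (2 * Real.pi * Complex.I * z / r)

/-- `{z} = q^z - q^{-z}`. -/
def qbr (r : ℕ) (z : ℂ) : ℂ := qp r z - qp r (-z)

/-- the quantum integer `[k] = {k}/{1}`. -/
def qint (r k : ℕ) : ℂ := qbr r k / qbr r 1

/-- the quantum factorial `[k]!`. -/
def qfact (r k : ℕ) : ℂ := ∏ j ∈ Finset.range k, qint r (j + 1)

/-- the Gaussian binomial `[n choose k]`. -/
def qbinom (r n k : ℕ) : ℂ := qfact r n / (qfact r k * qfact r (n - k))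

/-- the falling product `{z;k} = Π_{j=0}^{k-1} {z-j}`. -/
def qbrfall (r : ℕ) (z : ℂ) (k : ℕ) : ℂ := ∏ j ∈ Finset.range k, qbr r (z - j)

/-- the element `T_γ^β = (1/r') Σ_{b=0}^{r'-1} q^{-γb} K^{b+β}`. -/
def Tel {A : Type*} [Ring A] [Algebra ℂ A] (r r' : ℕ) (K : ℂ → A) (γ β : ℂ) : A :=
  (r' : ℂ)⁻¹ • ∑ b ∈ Finset.range r', qp r (-(γ * b)) • K (b + β)

/-- the divided power `F^{(a)} = ({1}^a/[a]!) F^a`. -/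
def Fdiv {A : Type*} [Ring A] [Algebra ℂ A] (r : ℕ) (F : A) (a : ℕ) : A :=
  ((qbr r 1) ^ a / qfact r a) • F ^ a

open scoped Classical

open Finset

/-! ### Auxiliary scalar lemmas -/

lemma qp_add (r : ℕ) (a b : ℂ) : qp r (a + b) = qp r a * qp r b := by
  rw [qp, qp, qp, ← Complex.exp_add]; ring_nf

lemma qp_zero (r : ℕ) : qp r 0 = 1 := by simp [qp]

lemma qp_ne_zero (r : ℕ) (z : ℂ) : qp r z ≠ 0 := Complex.exp_ne_zero _

lemma qp_neg (r : ℕ) (z : ℂ) : qp r (-z) = (qp r z)⁻¹ := by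
  rw [qp, qp, ← Complex.exp_neg]; ring_nf

lemma qp_pow (r k : ℕ) (z : ℂ) : qp r z ^ k = qp r (k * z) := by
  rw [qp, qp, ← Complex.exp_nat_mul]; ring_nf

lemma qp_eq_one_iff (r : ℕ) (hr : r ≠ 0) (d : ℤ) : qp r d = 1 ↔ (r : ℤ) ∣ d := by
  rw [qp, Complex.exp_eq_one_iff]
  have h2 : (2 * Real.pi * Complex.I : ℂ) ≠ 0 := by
    simp [Real.pi_ne_zero, Complex.I_ne_zero]
  have hrC : (r : ℂ) ≠ 0 := Nat.cast_ne_zero.mpr hr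
  constructor
  · rintro ⟨n, hn⟩
    refine ⟨n, ?_⟩
    rw [div_eq_iff hrC] at hn
    have h'' : (2 * Real.pi * Complex.I) * (d : ℂ) = (2 * Real.pi * Complex.I) * (n * r) := by
      linear_combination hn
    have := mul_left_cancel₀ h2 h''
    have hd : d = n * (r:ℤ) := by exact_mod_cast this
    rw [hd]; ring
  · rintro ⟨n, rfl⟩
    exact ⟨n, by push_cast; field_simp⟩

lemma odd_dvd (r : ℕ) (hodd : Odd r) (d : ℤ) (h : (r:ℤ) ∣ 2 * d) : (r:ℤ) ∣ d := by
  rcases hodd with ⟨k, hk⟩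
  have hd : d = (k + 1) * (2 * d) - (r : ℤ) * d := by
    have : (r : ℤ) = 2 * k + 1 := by exact_mod_cast congrArg Nat.cast hk
    rw [this]; ring
  rw [hd]
  exact dvd_sub (h.mul_left _) (Dvd.intro _ rfl)

lemma qp2_eq_one_iff (r : ℕ) (hr : r ≠ 0) (hodd : Odd r) (d : ℤ) :
    qp r (2 * d) = 1 ↔ (r : ℤ) ∣ d := by
  rw [show ((2 : ℂ) * d) = ((2 * d : ℤ) : ℂ) by push_cast; ring, qp_eq_one_iff r hr]
  exact ⟨odd_dvd r hodd d, fun h => Dvd.dvd.mul_left h 2⟩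

lemma qp_geom (r : ℕ) (hr : r ≠ 0) (hodd : Odd r) (d : ℤ) :
    ∑ a ∈ Finset.range r, qp r (2 * a * d) = if (r:ℤ) ∣ d then (r:ℂ) else 0 := by
  have hx : ∀ a : ℕ, qp r (2 * a * d) = (qp r (2 * d)) ^ a := by
    intro a; rw [qp_pow]; congr 1; ring
  by_cases h : (r:ℤ) ∣ d
  · simp only [hx, (qp2_eq_one_iff r hr hodd d).mpr h, one_pow, if_pos h,
      Finset.sum_const, card_range, nsmul_eq_mul, mul_one]
  · have hne : qp r (2*d) ≠ 1 := fun hc => h ((qp2_eq_one_iff r hr hodd d).mp hc)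
    rw [if_neg h]
    simp only [hx]
    rw [geom_sum_eq hne]
    have : qp r (2*d) ^ r = 1 := by
      rw [qp_pow]
      rw [show ((r:ℂ) * (2 * d)) = (((r : ℤ) * (2*d) : ℤ) : ℂ) by push_cast; ring,
        qp_eq_one_iff r hr]
      exact Dvd.intro _ rfl
    rw [this, sub_self, zero_div]

lemma qbr_ne_zero (r : ℕ) (hr : r ≠ 0) (hodd : Odd r) (j : ℕ) (h0 : 0 < j) (hj : j < r) :
    qbr r j ≠ 0 := by
  have key : qbr r j = qp r (-(j:ℂ)) * (qp r (2 * j) - 1) := by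
    rw [qbr, mul_sub, mul_one, ← qp_add]
    congr 2; ring
  rw [key]
  apply mul_ne_zero (qp_ne_zero _ _)
  rw [sub_ne_zero]
  intro hc
  have hdvd : (r:ℤ) ∣ (j:ℤ) := by
    apply (qp2_eq_one_iff r hr hodd (j:ℤ)).mp
    rw [show (((j:ℤ)):ℂ) = ((j:ℕ):ℂ) by push_cast; ring]
    exact hc
  have := Int.le_of_dvd (by exact_mod_cast h0) hdvd
  omega

lemma qfact_ne_zero (r : ℕ) (hr : r ≠ 0) (hodd : Odd r) (k : ℕ) (hk : k < r) :
    qfact r k ≠ 0 := by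
  rw [qfact]
  apply Finset.prod_ne_zero_iff.mpr
  intro j hj
  rw [Finset.mem_range] at hj
  rw [qint]
  apply div_ne_zero
  · exact_mod_cast qbr_ne_zero r hr hodd (j+1) (Nat.succ_pos j) (by omega)
  · exact_mod_cast qbr_ne_zero r hr hodd 1 one_pos (by omega)

/-! ### Auxiliary algebra lemmas -/

section Alg
variable {A : Type*} [Ring A] [Algebra ℂ A]

lemma span_mul_right (s t : Set A) (y : A)
    (h : ∀ x ∈ s, x * y ∈ Submodule.span ℂ t) :
    ∀ x ∈ Submodule.span ℂ s, x * y ∈ Submodule.span ℂ t := by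
  intro x hx
  induction hx using Submodule.span_induction with
  | mem z hz => exact h z hz
  | zero => rw [zero_mul]; exact zero_mem _
  | add a b _ _ ha hb => rw [add_mul]; exact add_mem ha hb
  | smul c a _ ha => rw [smul_mul_assoc]; exact Submodule.smul_mem _ _ ha

lemma span_mul_left (s t : Set A) (y : A)
    (h : ∀ x ∈ s, y * x ∈ Submodule.span ℂ t) :
    ∀ x ∈ Submodule.span ℂ s, y * x ∈ Submodule.span ℂ t := by
  intro x hx
  induction hx using Submodule.span_induction with
  | mem z hz => exact h z hz
  | zero => rw [mul_zero]; exact zero_mem _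
  | add a b _ _ ha hb => rw [mul_add]; exact add_mem ha hb
  | smul c a _ ha => rw [mul_smul_comm]; exact Submodule.smul_mem _ _ ha

variable (r : ℕ) (E F : A) (K : ℂ → A) (α : ℂ)

lemma K_r (hKadd : ∀ a b : ℂ, K a * K b = K (a + b))
    (hKq : K ((r : ℂ) / 2) = qp r (α * r / 2) • (1 : A)) :
    K (r : ℂ) = qp r (α * r) • 1 := by
  have : K ((r:ℂ)/2) * K ((r:ℂ)/2) = K (r : ℂ) := by
    rw [hKadd]; norm_num
  rw [← this, hKq, smul_mul_assoc, mul_smul_comm, smul_smul, one_mul, ← qp_add]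
  congr 1; ring

lemma K_shift (hKadd : ∀ a b : ℂ, K a * K b = K (a + b))
    (hKq : K ((r : ℂ) / 2) = qp r (α * r / 2) • (1 : A)) :
    ∀ (t : ℤ) (x : ℂ), K (x + t * r) = qp r (α * r * t) • K x := by
  have hp : ∀ x : ℂ, K (x + r) = qp r (α * r) • K x := by
    intro x
    rw [← hKadd, K_r r K α hKadd hKq, mul_smul_comm, mul_one]
  have hm : ∀ x : ℂ, K (x - r) = qp r (-(α * r)) • K x := by
    intro x
    have := hp (x - r)
    rw [sub_add_cancel] at this
    rw [this, smul_smul, qp_neg, inv_mul_cancel₀ (qp_ne_zero _ _), one_smul]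
  intro t
  induction t using Int.induction_on with
  | zero => intro x; simp [qp_zero]
  | succ t ih =>
      intro x
      have h1 : x + (((t : ℤ) + 1 : ℤ) : ℂ) * r = (x + ((t : ℤ) : ℂ) * r) + r := by
        push_cast; ring
      rw [h1, hp, ih, smul_smul, ← qp_add]
      congr 1; push_cast; ring
  | pred t ih =>
      intro x
      have h1 : x + ((-(t : ℤ) - 1 : ℤ) : ℂ) * r = (x + ((-(t : ℤ) : ℤ) : ℂ) * r) - r := by
        push_cast; ring
      rw [h1, hm, ih, smul_smul, ← qp_add]
      congr 1; push_cast; ring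

lemma K_F_pow (hKF : ∀ a : ℂ, K a * F = qp r (-(2 * a)) • (F * K a)) :
    ∀ (c : ℂ) (b : ℕ), K c * F ^ b = qp r (-(2 * c * b)) • (F ^ b * K c) := by
  intro c b
  induction b with
  | zero => simp [qp_zero]
  | succ b ih =>
      rw [pow_succ, ← mul_assoc, ih, smul_mul_assoc, mul_assoc (F ^ b) (K c) F, hKF,
        mul_smul_comm, smul_smul, ← qp_add, ← mul_assoc, ← pow_succ]
      congr 2; push_cast; ring

/-- generators `E^m * K c` -/
def gensEK (m : ℕ) : Set A := {x | ∃ c : ℤ, x = E ^ m * K c}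

lemma hFEbase (hEF : E * F - F * E = (qbr r 1)⁻¹ • (K 1 - K (-1))) :
    F * E - E * F ∈ Submodule.span ℂ (gensEK E K 0) := by
  have h1 : F * E - E * F
      = (-(qbr r 1)⁻¹) • (E ^ 0 * K ((1 : ℤ) : ℂ)) + (qbr r 1)⁻¹ • (E ^ 0 * K ((-1 : ℤ) : ℂ)) := by
    have h2 : F * E - E * F = -(E * F - F * E) := by noncomm_ring
    rw [pow_zero, one_mul, one_mul, h2, hEF]
    push_cast
    rw [smul_sub]
    module
  rw [h1]
  exact add_mem (Submodule.smul_mem _ _ (Submodule.subset_span ⟨1, rfl⟩))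
    (Submodule.smul_mem _ _ (Submodule.subset_span ⟨-1, rfl⟩))

lemma hFEm (hKE : ∀ a : ℂ, K a * E = qp r (2 * a) • (E * K a))
    (hEF : E * F - F * E = (qbr r 1)⁻¹ • (K 1 - K (-1))) :
    ∀ m : ℕ, F * E ^ (m + 1) - E ^ (m + 1) * F ∈ Submodule.span ℂ (gensEK E K m) := by
  intro m
  induction m with
  | zero =>
      rw [pow_one]
      exact hFEbase r E F K hEF
  | succ m ih =>
      have key : F * E ^ (m + 2) - E ^ (m + 2) * F
          = (F * E ^ (m + 1) - E ^ (m + 1) * F) * E + E ^ (m + 1) * (F * E - E * F) := by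
        rw [pow_succ]
        noncomm_ring
      rw [key]
      apply add_mem
      · refine span_mul_right _ _ E ?_ _ ih
        rintro x ⟨c, rfl⟩
        have : (E ^ m * K c) * E = qp r (2 * c) • (E ^ (m + 1) * K c) := by
          rw [mul_assoc, hKE, mul_smul_comm, pow_succ, mul_assoc]
        rw [this]
        exact Submodule.smul_mem _ _ (Submodule.subset_span ⟨c, rfl⟩)
      · refine span_mul_left (gensEK E K 0) _ (E ^ (m + 1)) ?_ _ (hFEbase r E F K hEF)
        rintro x ⟨c, rfl⟩
        rw [pow_zero, one_mul]
        exact Submodule.subset_span ⟨c, rfl⟩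

/-- generators of the "invisible" subspace: `E^a F^b K(c)` with `a ≤ r-2`, `b ≤ r-1`. -/
def genV : Set A :=
  {x | ∃ a b : ℕ, ∃ c : ℤ, a + 2 ≤ r ∧ b + 1 ≤ r ∧ x = E ^ a * F ^ b * K c}

lemma hVmulK (hKadd : ∀ a b : ℂ, K a * K b = K (a + b)) (c : ℤ) :
    ∀ x ∈ Submodule.span ℂ (genV r E F K), x * K (c : ℂ) ∈ Submodule.span ℂ (genV r E F K) := by
  apply span_mul_right
  rintro x ⟨a, b, c', ha, hb, rfl⟩
  have : E ^ a * F ^ b * K (c' : ℂ) * K (c : ℂ) = E ^ a * F ^ b * K (((c' + c : ℤ) : ℂ)) := by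
    rw [mul_assoc, hKadd]
    norm_num
  rw [this]
  exact Submodule.subset_span ⟨a, b, c' + c, ha, hb, rfl⟩

lemma hFmulV (hKE : ∀ a : ℂ, K a * E = qp r (2 * a) • (E * K a))
    (hKF : ∀ a : ℂ, K a * F = qp r (-(2 * a)) • (F * K a))
    (hKadd : ∀ a b : ℂ, K a * K b = K (a + b))
    (hEF : E * F - F * E = (qbr r 1)⁻¹ • (K 1 - K (-1)))
    (hFr : F ^ r = 0) :
    ∀ x ∈ Submodule.span ℂ (genV r E F K), F * x ∈ Submodule.span ℂ (genV r E F K) := by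
  apply span_mul_left
  rintro x ⟨a, b, c, ha, hb, rfl⟩
  have hsplit : F * (E ^ a * F ^ b * K (c : ℂ))
      = E ^ a * F ^ (b + 1) * K (c : ℂ) + (F * E ^ a - E ^ a * F) * (F ^ b * K (c : ℂ)) := by
    rw [pow_succ']
    noncomm_ring
  rw [hsplit]
  apply add_mem
  · rcases Nat.lt_or_ge (b + 1 + 1) (r + 1) with hb1 | hb1
    · exact Submodule.subset_span ⟨a, b + 1, c, by omega, by omega, rfl⟩
    · have hbr : b + 1 = r := by omega
      rw [hbr, hFr, mul_zero, zero_mul]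
      exact zero_mem _
  · cases a with
    | zero =>
        simp only [pow_zero, one_mul, mul_one, sub_self, zero_mul]
        exact zero_mem _
    | succ a' =>
        refine span_mul_right (gensEK E K a') _ _ ?_ _ (hFEm r E F K hKE hEF a')
        rintro x ⟨c', rfl⟩
        have : (E ^ a' * K (c' : ℂ)) * (F ^ b * K (c : ℂ))
            = qp r (-(2 * c' * b)) • (E ^ a' * F ^ b * K (((c' + c : ℤ)) : ℂ)) := by
          rw [mul_assoc, ← mul_assoc (K (c' : ℂ)), K_F_pow r F K hKF, smul_mul_assoc,
            mul_smul_comm, mul_assoc (F ^ b), hKadd, ← mul_assoc]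
          norm_num
        rw [this]
        exact Submodule.smul_mem _ _
          (Submodule.subset_span ⟨a', b, c' + c, by omega, by omega, rfl⟩)

lemma C1 (hKE : ∀ a : ℂ, K a * E = qp r (2 * a) • (E * K a))
    (hKF : ∀ a : ℂ, K a * F = qp r (-(2 * a)) • (F * K a))
    (hKadd : ∀ a b : ℂ, K a * K b = K (a + b))
    (hEF : E * F - F * E = (qbr r 1)⁻¹ • (K 1 - K (-1)))
    (hFr : F ^ r = 0) :
    ∀ ℓ m : ℕ, m + 1 ≤ r → ℓ + 1 ≤ r →
      F ^ ℓ * E ^ m - E ^ m * F ^ ℓ ∈ Submodule.span ℂ (genV r E F K) := by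
  intro ℓ
  induction ℓ with
  | zero =>
      intro m _ _
      simp only [pow_zero, one_mul, mul_one, sub_self]
      exact zero_mem _
  | succ ℓ ih =>
      intro m hm hℓ
      have key : F ^ (ℓ + 1) * E ^ m - E ^ m * F ^ (ℓ + 1)
          = F * (F ^ ℓ * E ^ m - E ^ m * F ^ ℓ) + (F * E ^ m - E ^ m * F) * F ^ ℓ := by
        rw [pow_succ']
        noncomm_ring
      rw [key]
      apply add_mem
      · exact hFmulV r E F K hKE hKF hKadd hEF hFr _ (ih m hm (by omega))
      · cases m with
        | zero =>
            simp only [pow_zero, one_mul, mul_one, sub_self, zero_mul]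
            exact zero_mem _
        | succ m' =>
            refine span_mul_right (gensEK E K m') _ _ ?_ _ (hFEm r E F K hKE hEF m')
            rintro x ⟨c, rfl⟩
            have : (E ^ m' * K (c : ℂ)) * F ^ ℓ
                = qp r (-(2 * c * ℓ)) • (E ^ m' * F ^ ℓ * K (c : ℂ)) := by
              rw [mul_assoc, K_F_pow r F K hKF, mul_smul_comm, ← mul_assoc]
            rw [this]
            exact Submodule.smul_mem _ _
              (Submodule.subset_span ⟨m', ℓ, c, by omega, by omega, rfl⟩)

/-! ### The Fourier inversion identity -/

lemma F4 (hr : r ≠ 0) (hodd : Odd r) :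
    ∀ b₀ : ℕ, b₀ < r →
      ∑ j ∈ Finset.range r, qp r ((2 * (j:ℂ) + α) * b₀) • Tel r r K (2 * (j:ℂ) + α) 0
        = K (b₀ : ℂ) := by
  intro b₀ hb₀
  have step : ∀ j ∈ Finset.range r,
      qp r ((2*(j:ℂ)+α)*b₀) • Tel r r K (2*(j:ℂ)+α) 0
      = ∑ b ∈ Finset.range r,
          ((r:ℂ)⁻¹ * (qp r (α*((b₀:ℂ)-b)) * qp r (2*(j:ℂ)*((b₀:ℂ)-b)))) • K (b:ℂ) := by
    intro j _
    rw [Tel, smul_smul, Finset.smul_sum]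
    apply Finset.sum_congr rfl
    intro b _
    rw [smul_smul, add_zero]
    congr 1
    have h2 : qp r ((2*(j:ℂ)+α)*b₀) * qp r (-((2*(j:ℂ)+α)*b))
        = qp r (α*((b₀:ℂ)-b)) * qp r (2*(j:ℂ)*((b₀:ℂ)-b)) := by
      rw [← qp_add, ← qp_add]; congr 1; ring
    linear_combination ((r:ℂ))⁻¹ * h2
  rw [Finset.sum_congr rfl step, Finset.sum_comm]
  have step2 : ∀ b ∈ Finset.range r,
      (∑ j ∈ Finset.range r,
          ((r:ℂ)⁻¹ * (qp r (α*((b₀:ℂ)-b)) * qp r (2*(j:ℂ)*((b₀:ℂ)-b)))) • K (b:ℂ))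
      = (if b = b₀ then (1:ℂ) else 0) • K (b:ℂ) := by
    intro b hb
    rw [Finset.mem_range] at hb
    rw [← Finset.sum_smul]
    congr 1
    have hfac : ∑ j ∈ Finset.range r,
        ((r:ℂ)⁻¹ * (qp r (α*((b₀:ℂ)-b)) * qp r (2*(j:ℂ)*((b₀:ℂ)-b))))
        = (r:ℂ)⁻¹ * qp r (α*((b₀:ℂ)-b)) *
            ∑ j ∈ Finset.range r, qp r (2*(j:ℂ)*(((b₀:ℤ) - (b:ℤ) : ℤ):ℂ)) := by
      rw [Finset.mul_sum]
      apply Finset.sum_congr rfl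
      intro j _
      have : qp r (2*(j:ℂ)*(((b₀:ℤ) - (b:ℤ) : ℤ):ℂ)) = qp r (2*(j:ℂ)*((b₀:ℂ)-b)) := by
        congr 1; push_cast; ring
      rw [this]; ring
    rw [hfac, qp_geom r hr hodd]
    have hiff : ((r:ℤ) ∣ ((b₀:ℤ) - (b:ℤ))) ↔ b = b₀ := by
      constructor
      · intro h
        have := Int.eq_zero_of_abs_lt_dvd h (by rw [abs_lt]; constructor <;> omega)
        omega
      · rintro rfl; simp
    by_cases hbb : b = b₀
    · subst hbb
      rw [if_pos (hiff.mpr rfl), if_pos rfl, sub_self, mul_zero, qp_zero, mul_one]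
      have hrC : (r:ℂ) ≠ 0 := Nat.cast_ne_zero.mpr hr
      field_simp
    · rw [if_neg (fun h => hbb (hiff.mp h)), if_neg hbb, mul_zero]
  rw [Finset.sum_congr rfl step2]
  simp only [ite_smul, one_smul, zero_smul]
  rw [Finset.sum_ite_eq' (Finset.range r) b₀ (fun b => K (b:ℂ))]
  rw [if_pos (Finset.mem_range.mpr hb₀)]

lemma C2 (hr3 : 3 ≤ r) (hodd : Odd r)
    (hKadd : ∀ a b : ℂ, K a * K b = K (a + b))
    (hKq : K ((r : ℂ) / 2) = qp r (α * r / 2) • (1 : A))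
    (lam : A →ₗ[ℂ] ℂ)
    (hlam : ∀ ℓ m n : ℕ, ℓ < r → m < r → n < r →
      lam (E ^ ℓ * Fdiv r F m * Tel r r K (2 * n + α) 0) =
        if ℓ = r - 1 ∧ m = r - 1 then
          qp r ((2 * (n : ℂ) + α) * (1 - r)) / ((Real.sqrt r : ℝ) : ℂ) else 0) :
    ∀ (a b : ℕ), a < r → b < r → ∀ c : ℤ,
      lam (E ^ a * F ^ b * K (c : ℂ)) =
        if a = r - 1 ∧ b = r - 1 ∧ (r:ℤ) ∣ (c + 1) then
          (((Real.sqrt r : ℝ) : ℂ) * qfact r (r - 1) / (qbr r 1) ^ (r - 1)) *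
            qp r (((c:ℂ) + 1 - (r:ℂ)) * α)
        else 0 := by
  intro a b ha hb c
  have hrne : r ≠ 0 := by omega
  have hrZ : (0:ℤ) < (r:ℤ) := by exact_mod_cast Nat.pos_of_ne_zero hrne
  set t : ℤ := c / r with ht
  set b₀ : ℕ := (c % r).toNat with hb₀def
  have hmod : 0 ≤ c % (r:ℤ) := Int.emod_nonneg c (by omega)
  have hb₀ : (b₀ : ℤ) = c % r := Int.toNat_of_nonneg hmod
  have hb₀r : b₀ < r := by
    have := Int.emod_lt_of_pos c hrZ
    omega
  have hc : c = (b₀:ℤ) + t * r := by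
    rw [hb₀, ht]
    linear_combination -Int.emod_add_mul_ediv c r
  have hKc : K ((c:ℤ):ℂ) = qp r (α * r * t) • K ((b₀:ℕ):ℂ) := by
    have hcast : ((c:ℤ):ℂ) = ((b₀:ℕ):ℂ) + (t:ℂ) * r := by
      rw [hc]; push_cast; ring
    rw [hcast]
    exact K_shift r K α hKadd hKq t _
  rw [hKc, mul_smul_comm, map_smul, smul_eq_mul,
    ← F4 r K α hrne hodd b₀ hb₀r, Finset.mul_sum]
  simp only [mul_smul_comm, map_smul, smul_eq_mul, map_sum]
  have hterm : ∀ j ∈ Finset.range r,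
      qp r ((2 * (j:ℂ) + α) * b₀) * lam (E ^ a * F ^ b * Tel r r K (2 * (j:ℂ) + α) 0)
      = qp r ((2 * (j:ℂ) + α) * b₀) * ((qfact r b / (qbr r 1) ^ b) *
          (if a = r - 1 ∧ b = r - 1 then
            qp r ((2 * (j:ℂ) + α) * (1 - r)) / ((Real.sqrt r : ℝ) : ℂ) else 0)) := by
    intro j hj
    congr 1
    have hFb : (E ^ a : A) * F ^ b * Tel r r K (2 * (j:ℂ) + α) 0
        = (qfact r b / (qbr r 1) ^ b) • (E ^ a * Fdiv r F b * Tel r r K (2 * (j:ℂ) + α) 0) := by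
      rw [Fdiv, mul_smul_comm, smul_mul_assoc, smul_smul]
      have h1 : (qfact r b / (qbr r 1) ^ b) * ((qbr r 1) ^ b / qfact r b) = 1 := by
        have hq1 : qbr r 1 ≠ 0 := by
          have := qbr_ne_zero r hrne hodd 1 one_pos (by omega)
          simpa using this
        field_simp [qfact_ne_zero r hrne hodd b hb]
      rw [h1, one_smul]
    rw [hFb, map_smul, smul_eq_mul, hlam a b j ha hb (Finset.mem_range.mp hj)]
  rw [Finset.sum_congr rfl hterm]
  by_cases hab : a = r - 1 ∧ b = r - 1
  · obtain ⟨ha1, hb1⟩ := hab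
    simp only [if_pos (⟨ha1, hb1⟩ : a = r - 1 ∧ b = r - 1)]
    have hsum : ∑ j ∈ Finset.range r,
        qp r ((2 * (j:ℂ) + α) * b₀) * ((qfact r b / (qbr r 1) ^ b) *
          (qp r ((2 * (j:ℂ) + α) * (1 - r)) / ((Real.sqrt r : ℝ) : ℂ)))
        = (qfact r b / (qbr r 1) ^ b / ((Real.sqrt r : ℝ) : ℂ)) * qp r (α * ((b₀:ℂ) + 1 - r)) *
            ∑ j ∈ Finset.range r, qp r (2 * (j:ℂ) * (((b₀:ℤ) + 1 - (r:ℤ) : ℤ):ℂ)) := by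
      rw [Finset.mul_sum]
      apply Finset.sum_congr rfl
      intro j _
      have h2 : qp r ((2 * (j:ℂ) + α) * b₀) * qp r ((2 * (j:ℂ) + α) * (1 - r))
          = qp r (α * ((b₀:ℂ) + 1 - r)) * qp r (2 * (j:ℂ) * (((b₀:ℤ) + 1 - (r:ℤ) : ℤ):ℂ)) := by
        rw [← qp_add, ← qp_add]
        congr 1
        push_cast
        ring
      calc qp r ((2 * (j:ℂ) + α) * b₀) * ((qfact r b / (qbr r 1) ^ b) *
              (qp r ((2 * (j:ℂ) + α) * (1 - r)) / ((Real.sqrt r : ℝ) : ℂ)))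
          = (qfact r b / (qbr r 1) ^ b / ((Real.sqrt r : ℝ) : ℂ)) *
              (qp r ((2 * (j:ℂ) + α) * b₀) * qp r ((2 * (j:ℂ) + α) * (1 - r))) := by ring
        _ = (qfact r b / (qbr r 1) ^ b / ((Real.sqrt r : ℝ) : ℂ)) *
              (qp r (α * ((b₀:ℂ) + 1 - r)) *
                qp r (2 * (j:ℂ) * (((b₀:ℤ) + 1 - (r:ℤ) : ℤ):ℂ))) := by rw [h2]
        _ = _ := by ring
    rw [hsum, qp_geom r hrne hodd]
    have hdviff : ((r:ℤ) ∣ ((b₀:ℤ) + 1 - (r:ℤ))) ↔ ((r:ℤ) ∣ (c + 1)) := by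
      have hkey : c + 1 = ((b₀:ℤ) + 1 - r) + (t + 1) * r := by rw [hc]; ring
      constructor
      · intro h
        rw [hkey]
        exact dvd_add h (Dvd.intro_left _ rfl)
      · intro h
        have : ((b₀:ℤ) + 1 - r) = (c + 1) - (t + 1) * r := by omega
        rw [this]
        exact dvd_sub h (Dvd.intro_left _ rfl)
    by_cases hdvd : (r:ℤ) ∣ (c + 1)
    · rw [if_pos (hdviff.mpr hdvd), if_pos ⟨ha1, hb1, hdvd⟩]
      have hs0 : ((Real.sqrt r : ℝ) : ℂ) ≠ 0 := by
        norm_cast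
        exact Real.sqrt_ne_zero'.mpr (by exact_mod_cast Nat.pos_of_ne_zero hrne)
      have hs2 : ((Real.sqrt r : ℝ) : ℂ) * ((Real.sqrt r : ℝ) : ℂ) = (r:ℂ) := by
        rw [← Complex.ofReal_mul, Real.mul_self_sqrt (Nat.cast_nonneg r)]
        norm_cast
      have heq : qp r (α * r * t) * qp r (α * ((b₀:ℂ) + 1 - r)) = qp r (((c:ℂ) + 1 - r) * α) := by
        rw [← qp_add]
        congr 1
        have : ((c:ℤ):ℂ) = ((b₀:ℕ):ℂ) + (t:ℂ) * r := by rw [hc]; push_cast; ring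
        rw [this]
        ring
      have hRS : ((Real.sqrt r : ℝ) : ℂ) * ((Real.sqrt r : ℝ) : ℂ) / ((Real.sqrt r : ℝ) : ℂ)
          = ((Real.sqrt r : ℝ) : ℂ) := mul_div_cancel_right₀ _ hs0
      rw [hb1]
      calc qp r (α * r * t) * ((qfact r (r-1) / (qbr r 1) ^ (r-1) / ((Real.sqrt r : ℝ) : ℂ)) *
              qp r (α * ((b₀:ℂ) + 1 - r)) * (r:ℂ))
          = (qfact r (r-1) / (qbr r 1) ^ (r-1)) * ((r:ℂ) / ((Real.sqrt r : ℝ) : ℂ)) *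
              (qp r (α * r * t) * qp r (α * ((b₀:ℂ) + 1 - r))) := by ring
        _ = (qfact r (r-1) / (qbr r 1) ^ (r-1)) *
              (((Real.sqrt r : ℝ) : ℂ) * ((Real.sqrt r : ℝ) : ℂ) / ((Real.sqrt r : ℝ) : ℂ)) *
              qp r (((c:ℂ) + 1 - r) * α) := by rw [heq, hs2]
        _ = _ := by rw [hRS]; ring
    · rw [if_neg (fun h => hdvd (hdviff.mp h)), mul_zero, mul_zero, if_neg]
      tauto
  · simp only [if_neg hab, mul_zero, Finset.sum_const_zero]
    rw [if_neg]
    tauto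

end Alg

/-- For `r ≥ 3` odd (so `r' = r`), the left integral `λ_α` of `u_ᾱ`, defined on the basis
by `λ_α(E^ℓ F^{(m)} T_{2n+α}^0) = δ_{ℓ,r-1} δ_{m,r-1} q^{(2n+α)(1-r)}/√r`, satisfies
`λ_α(F^ℓ E^m K^n) = δ_{ℓ,r-1} δ_{m,r-1} χ_{(r/2)ℤ}(n+1) (√r [r-1]!/{1}^{r-1})
q^{(n+1-r)α}`. -/
theorem integral_sl2 {A : Type*} [Ring A] [Algebra ℂ A] (r : ℕ) (hr : 3 ≤ r)
    (hodd : Odd r) (E F : A) (K : ℂ → A)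
    (hKadd : ∀ a b : ℂ, K a * K b = K (a + b)) (hK0 : K 0 = 1)
    (hKE : ∀ a : ℂ, K a * E = qp r (2 * a) • (E * K a))
    (hKF : ∀ a : ℂ, K a * F = qp r (-(2 * a)) • (F * K a))
    (hEF : E * F - F * E = (qbr r 1)⁻¹ • (K 1 - K (-1)))
    (hEr : E ^ r = 0) (hFr : F ^ r = 0)
    (α : ℂ)
    (hKq : K ((r : ℂ) / 2) = qp r (α * r / 2) • (1 : A))
    (lam : A →ₗ[ℂ] ℂ)
    (hlam : ∀ ℓ m n : ℕ, ℓ < r → m < r → n < r →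
      lam (E ^ ℓ * Fdiv r F m * Tel r r K (2 * n + α) 0) =
        if ℓ = r - 1 ∧ m = r - 1 then
          qp r ((2 * (n : ℂ) + α) * (1 - r)) / ((Real.sqrt r : ℝ) : ℂ) else 0) :
    ∀ ℓ m n : ℕ, ℓ < r → m < r → n < r →
      lam (F ^ ℓ * E ^ m * K n) =
        if ℓ = r - 1 ∧ m = r - 1 ∧ (∃ j : ℤ, ((n : ℂ) + 1) = j * r / 2) then
          (((Real.sqrt r : ℝ) : ℂ) * qfact r (r - 1) / (qbr r 1) ^ (r - 1)) *
            qp r (((n : ℂ) + 1 - r) * α)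
        else 0 := by
  intro ℓ m n hℓ hm hn
  have hrne : r ≠ 0 := by omega
  have hsplit : F ^ ℓ * E ^ m * K ((n:ℕ):ℂ)
      = E ^ m * F ^ ℓ * K ((n:ℕ):ℂ) + (F ^ ℓ * E ^ m - E ^ m * F ^ ℓ) * K ((n:ℕ):ℂ) := by
    noncomm_ring
  rw [hsplit, map_add]
  have hz : lam ((F ^ ℓ * E ^ m - E ^ m * F ^ ℓ) * K ((n:ℕ):ℂ)) = 0 := by
    have hmem : (F ^ ℓ * E ^ m - E ^ m * F ^ ℓ) * K ((n:ℕ):ℂ)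
        ∈ Submodule.span ℂ (genV r E F K) := by
      have h1 := C1 r E F K hKE hKF hKadd hEF hFr ℓ m (by omega) (by omega)
      have h2 := hVmulK r E F K hKadd (n:ℤ) _ h1
      rw [show (((n:ℤ)):ℂ) = ((n:ℕ):ℂ) by push_cast; ring] at h2
      exact h2
    have hker : Submodule.span ℂ (genV r E F K) ≤ LinearMap.ker lam := by
      rw [Submodule.span_le]
      rintro x ⟨a, b, c, ha2, hb2, rfl⟩
      simp only [SetLike.mem_coe, LinearMap.mem_ker]
      rw [C2 r E F K α hr hodd hKadd hKq lam hlam a b (by omega) (by omega) c]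
      rw [if_neg]
      rintro ⟨h1, h2, h3⟩
      omega
    exact LinearMap.mem_ker.mp (hker hmem)
  rw [hz, add_zero]
  have hmain := C2 r E F K α hr hodd hKadd hKq lam hlam m ℓ hm hℓ (n:ℤ)
  rw [show (((n:ℤ)):ℂ) = ((n:ℕ):ℂ) by push_cast; ring] at hmain
  rw [hmain]
  have hcond : (m = r - 1 ∧ ℓ = r - 1 ∧ (r:ℤ) ∣ ((n:ℤ) + 1))
      ↔ (ℓ = r - 1 ∧ m = r - 1 ∧ ∃ j : ℤ, ((n : ℂ) + 1) = j * r / 2) := by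
    constructor
    · rintro ⟨h1, h2, k, hk⟩
      refine ⟨h2, h1, 2 * k, ?_⟩
      have hC : ((n:ℤ):ℂ) + 1 = (r:ℂ) * k := by exact_mod_cast congrArg (Int.cast : ℤ → ℂ) hk
      push_cast at hC ⊢
      rw [hC]
      ring
    · rintro ⟨h1, h2, j, hj⟩
      refine ⟨h2, h1, ?_⟩
      have h2' : 2 * ((n:ℤ) + 1) = j * r := by
        have hC : 2 * ((n:ℂ) + 1) = j * r := by
          field_simp at hj
          linear_combination hj
        exact_mod_cast hC
      apply odd_dvd r hodd
      exact ⟨j, by linarith [h2']⟩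
  by_cases hC : ℓ = r - 1 ∧ m = r - 1 ∧ ∃ j : ℤ, ((n : ℂ) + 1) = j * r / 2
  · rw [if_pos (hcond.mpr hC), if_pos hC]
  · rw [if_neg (fun h => hC (hcond.mp h)), if_neg hC]

end
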